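/- arXiv:1604.04475 — 2 statements merged into one kernel-verified Lean document; each statement's English description precedes it below -/
import Mathlib

section
/- Let A be a first 3-Leibniz algebra and g = A⊗A its associated right Leibniz algebra with bracket [x1⊗x2, y1⊗y2] = [x1,y1,y2]⊗x2 + x1⊗[x2,y1,y2]. Suppose γ: A → A^{⊗3} is a linear map satisfying γ([x1,x2,x3]) = ad^{(3)}_{(x̂1,x2,x3)} γ(x1). Define δ: g → g⊗g by δ = (σ34ᵗ ∘ σ24ᵗ ∘ (γ ⊗ I_A) + I_A ⊗ γ), where σ24ᵗ swaps tensor factors 2 and 4 and σ34ᵗ swaps factors 3 and 4 of A^{⊗4}. Then δ satisfies the right 1-cocycle condition δ([X,Y]) = (1_g ⊗ ad_Y^{(r)} + ad_Y^{(r)} ⊗ 1_g) δ(X) for all X, Y ∈ g, where ad_Y^{(r)}(Z) = [Z,Y]. -/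
open TensorProduct

/-- The adjoint map `z ↦ [z, x2, x3]` of a trilinear bracket. -/
def adR {K A : Type*} [Field K] [AddCommGroup A] [Module K A]
    (f : A →ₗ[K] A →ₗ[K] A →ₗ[K] A) (x2 x3 : A) : A →ₗ[K] A where
  toFun z := f z x2 x3
  map_add' a b := by simp
  map_smul' c a := by simp

/-- The diagonal action `g⊗1⊗1 + 1⊗g⊗1 + 1⊗1⊗g` on `A ⊗ A ⊗ A`. -/
noncomputable def diag3 {K A : Type*} [Field K] [AddCommGroup A] [Module K A]
    (g : A →ₗ[K] A) : (A ⊗[K] (A ⊗[K] A)) →ₗ[K] (A ⊗[K] (A ⊗[K] A)) :=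
  TensorProduct.map g LinearMap.id
    + TensorProduct.map LinearMap.id (TensorProduct.map g LinearMap.id)
    + TensorProduct.map LinearMap.id (TensorProduct.map LinearMap.id g)

/-- `δ = σ34ᵗ ∘ σ24ᵗ ∘ (γ ⊗ I_A) + I_A ⊗ γ : A⊗A → (A⊗A)⊗(A⊗A)`.
On pure tensors the first summand sends `x1 ⊗ x2` to `Σ (u⊗x2)⊗(v⊗w)` for
`γ(x1) = Σ u⊗v⊗w` (factors `(u,v,w,x2)` become `(u,x2,v,w)` after swapping
factors 2,4 and then 3,4), and the second sends `x1⊗x2` to `Σ (x1⊗u)⊗(v⊗w)`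
for `γ(x2) = Σ u⊗v⊗w`. -/
noncomputable def deltaMap {K A : Type*} [Field K] [AddCommGroup A] [Module K A]
    (γ : A →ₗ[K] A ⊗[K] (A ⊗[K] A)) :
    (A ⊗[K] A) →ₗ[K] (A ⊗[K] A) ⊗[K] (A ⊗[K] A) :=
  ((TensorProduct.assoc K A A (A ⊗[K] A)).symm.toLinearMap
      ∘ₗ (TensorProduct.map LinearMap.id
            (TensorProduct.comm K (A ⊗[K] A) A).toLinearMap)
      ∘ₗ (TensorProduct.assoc K A (A ⊗[K] A) A).toLinearMap
      ∘ₗ (TensorProduct.map γ LinearMap.id))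
  + ((TensorProduct.assoc K A A (A ⊗[K] A)).symm.toLinearMap
      ∘ₗ (TensorProduct.map LinearMap.id γ))

set_option maxHeartbeats 1000000 in
/-- If `A` is a first 3-Leibniz algebra and `γ` satisfies the 1-cocycle
condition `γ([x1,x2,x3]) = ad^{(3)}_{(x̂1,x2,x3)} γ(x1)`, then
`δ = σ34ᵗ∘σ24ᵗ∘(γ⊗I) + I⊗γ` satisfies the right 1-cocycle condition
`δ([X,Y]) = (1⊗ad_Y^{(r)} + ad_Y^{(r)}⊗1) δ(X)` on the associated right Leibniz
algebra `g = A⊗A`. -/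
theorem delta_is_right_one_cocycle
    {K A : Type*} [Field K] [AddCommGroup A] [Module K A]
    (f : A →ₗ[K] A →ₗ[K] A →ₗ[K] A)
    (h1 : ∀ y1 y2 y3 x2 x3 : A,
      f (f y1 y2 y3) x2 x3 =
        f (f y1 x2 x3) y2 y3 + f y1 (f y2 x2 x3) y3 + f y1 y2 (f y3 x2 x3))
    (γ : A →ₗ[K] A ⊗[K] (A ⊗[K] A))
    (hcoc : ∀ x1 x2 x3 : A, γ (f x1 x2 x3) = diag3 (adR f x2 x3) (γ x1)) :
    ∃ B : (A ⊗[K] A) →ₗ[K] (A ⊗[K] A) →ₗ[K] (A ⊗[K] A),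
      (∀ x1 x2 y1 y2 : A,
        B (x1 ⊗ₜ[K] x2) (y1 ⊗ₜ[K] y2) =
          (f x1 y1 y2) ⊗ₜ[K] x2 + x1 ⊗ₜ[K] (f x2 y1 y2)) ∧
      (∀ X Y : A ⊗[K] A,
        deltaMap γ (B X Y) =
          TensorProduct.map LinearMap.id (B.flip Y) (deltaMap γ X)
            + TensorProduct.map (B.flip Y) LinearMap.id (deltaMap γ X)) := by
  classical
  -- `g2 y1 y2 = adR f y1 y2`, as a bilinear map
  let g2 : A →ₗ[K] A →ₗ[K] (A →ₗ[K] A) :=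
    LinearMap.mk₂ K (fun y1 y2 => adR f y1 y2)
      (fun y1 y1' y2 => by ext z; simp [adR])
      (fun c y1 y2 => by ext z; simp [adR])
      (fun y1 y2 y2' => by ext z; simp [adR])
      (fun c y1 y2 => by ext z; simp [adR])
  -- `h0 g = g⊗1 + 1⊗g` on `A ⊗ A`, linear in `g`
  let h0 : (A →ₗ[K] A) →ₗ[K] ((A ⊗[K] A) →ₗ[K] (A ⊗[K] A)) :=
    LinearMap.rTensorHom A + LinearMap.lTensorHom A
  -- `Bf Y X = [X, Y]`
  let Bf : (A ⊗[K] A) →ₗ[K] (A ⊗[K] A) →ₗ[K] (A ⊗[K] A) :=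
    TensorProduct.lift (g2.compr₂ h0)
  refine ⟨Bf.flip, ?_, ?_⟩
  · intro x1 x2 y1 y2
    simp [Bf, g2, h0, adR]
  · intro X Y
    rw [LinearMap.flip_flip]
    show deltaMap γ (Bf Y X) = _
    -- abbreviations
    set F : (A ⊗[K] (A ⊗[K] A)) ⊗[K] A →ₗ[K] (A ⊗[K] A) ⊗[K] (A ⊗[K] A) :=
      (TensorProduct.assoc K A A (A ⊗[K] A)).symm.toLinearMap
        ∘ₗ (TensorProduct.map LinearMap.id
              (TensorProduct.comm K (A ⊗[K] A) A).toLinearMap)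
        ∘ₗ (TensorProduct.assoc K A (A ⊗[K] A) A).toLinearMap with hF
    set G : A ⊗[K] (A ⊗[K] (A ⊗[K] A)) →ₗ[K] (A ⊗[K] A) ⊗[K] (A ⊗[K] A) :=
      (TensorProduct.assoc K A A (A ⊗[K] A)).symm.toLinearMap with hG
    have hδ : ∀ a b : A, deltaMap γ (a ⊗ₜ[K] b) = F ((γ a) ⊗ₜ[K] b) + G (a ⊗ₜ[K] (γ b)) := by
      intro a b
      rw [hF, hG]
      simp only [deltaMap, LinearMap.add_apply, LinearMap.coe_comp, Function.comp_apply,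
        TensorProduct.map_tmul, LinearMap.id_coe, id_eq]
    induction Y using TensorProduct.induction_on with
    | zero => simp
    | add Y Y' hY hY' =>
        simp only [map_add, TensorProduct.map_add_left, TensorProduct.map_add_right,
          LinearMap.add_apply]
        rw [hY, hY']
        abel
    | tmul y1 y2 =>
        set g : A →ₗ[K] A := adR f y1 y2 with hg
        have hB : Bf (y1 ⊗ₜ[K] y2) = h0 g := by
          simp [Bf, g2, hg]
        rw [hB]
        -- key lemmas
        have keyA : ∀ (a : A ⊗[K] (A ⊗[K] A)) (x2 : A),
            F ((diag3 g a) ⊗ₜ[K] x2) + F (a ⊗ₜ[K] (g x2)) =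
              TensorProduct.map LinearMap.id (h0 g) (F (a ⊗ₜ[K] x2))
                + TensorProduct.map (h0 g) LinearMap.id (F (a ⊗ₜ[K] x2)) := by
          intro a x2
          induction a using TensorProduct.induction_on with
          | zero => simp
          | add a a' ha ha' =>
              simp only [map_add, add_tmul, LinearMap.add_apply]
              rw [add_add_add_comm, ha, ha']
              abel
          | tmul u t =>
              induction t using TensorProduct.induction_on with
              | zero => simp [diag3]
              | add t t' ht ht' =>
                  simp only [tmul_add, map_add, add_tmul, LinearMap.add_apply]
                  rw [add_add_add_comm, ht, ht']
                  abel
              | tmul v w =>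
                  simp only [diag3, hF, hG, h0, TensorProduct.map_add_left, TensorProduct.map_add_right, LinearMap.add_apply, LinearMap.coe_comp,
                    Function.comp_apply, TensorProduct.map_tmul, LinearMap.id_coe, id_eq,
                    LinearMap.coe_rTensorHom, LinearMap.coe_lTensorHom,
                    LinearMap.rTensor_tmul, LinearMap.lTensor_tmul,
                    LinearEquiv.coe_coe, TensorProduct.assoc_tmul,
                    TensorProduct.assoc_symm_tmul, TensorProduct.comm_tmul,
                    add_tmul, tmul_add, map_add]
                  abel
        have keyB : ∀ (b : A ⊗[K] (A ⊗[K] A)) (x1 : A),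
            G ((g x1) ⊗ₜ[K] b) + G (x1 ⊗ₜ[K] (diag3 g b)) =
              TensorProduct.map LinearMap.id (h0 g) (G (x1 ⊗ₜ[K] b))
                + TensorProduct.map (h0 g) LinearMap.id (G (x1 ⊗ₜ[K] b)) := by
          intro b x1
          induction b using TensorProduct.induction_on with
          | zero => simp [diag3]
          | add b b' hb hb' =>
              simp only [tmul_add, map_add, add_tmul, LinearMap.add_apply]
              rw [add_add_add_comm, hb, hb']
              abel
          | tmul u t =>
              induction t using TensorProduct.induction_on with
              | zero => simp [diag3]
              | add t t' ht ht' =>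
                  simp only [tmul_add, map_add, add_tmul, LinearMap.add_apply]
                  rw [add_add_add_comm, ht, ht']
                  abel
              | tmul v w =>
                  simp only [diag3, hG, h0, TensorProduct.map_add_left, TensorProduct.map_add_right, LinearMap.add_apply, LinearMap.coe_comp,
                    Function.comp_apply, TensorProduct.map_tmul, LinearMap.id_coe, id_eq,
                    LinearMap.coe_rTensorHom, LinearMap.coe_lTensorHom,
                    LinearMap.rTensor_tmul, LinearMap.lTensor_tmul,
                    LinearEquiv.coe_coe, TensorProduct.assoc_tmul,
                    TensorProduct.assoc_symm_tmul, TensorProduct.comm_tmul,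
                    add_tmul, tmul_add, map_add]
                  abel
        induction X using TensorProduct.induction_on with
        | zero => simp
        | add X X' hX hX' =>
            simp only [map_add]
            rw [hX, hX']
            abel
        | tmul x1 x2 =>
            have hBx : (h0 g) (x1 ⊗ₜ[K] x2) = (g x1) ⊗ₜ[K] x2 + x1 ⊗ₜ[K] (g x2) := by
              simp [h0]
            rw [hBx, map_add, hδ, hδ, hδ]
            have hγ1 : γ (g x1) = diag3 g (γ x1) := hcoc x1 y1 y2
            have hγ2 : γ (g x2) = diag3 g (γ x2) := hcoc x2 y1 y2
            rw [hγ1, hγ2]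
            rw [map_add, map_add, add_add_add_comm, keyA (γ x1) x2, keyB (γ x2) x1]
            abel
end

section
/- Let A be the 4-dimensional real 3-Lie algebra with [e2,e3,e4] = e1, [e1,e3,e4] = e2 (alternating, other triples zero) and let b be a nonzero real. Define γ: A → A^{⊗3} by γ(x) = Σ f̃^{jkm}_i e_j⊗e_k⊗e_m for x = e_i, where f̃ are the (alternating) structure constants of the dual bracket [ẽ1,ẽ2,ẽ4]_* = b·ẽ1, [ẽ3,ẽ2,ẽ4]_* = b·ẽ3. Then γ satisfies the 3-Lie bialgebra 1-cocycle condition γ[y1,y2,y3] = ad^{(3)}_{(y2,y3,ŷ1)}γ(y1) + ad^{(3)}_{(y3,y1,ŷ2)}γ(y2) + ad^{(3)}_{(y1,y2,ŷ3)}γ(y3). -/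
open TensorProduct

/-- The alternating sum of the six permuted triple tensors of `u, v, w`. -/
noncomputable def altT {K A : Type*} [Field K] [AddCommGroup A] [Module K A]
    (u v w : A) : A ⊗[K] (A ⊗[K] A) :=
  u ⊗ₜ[K] (v ⊗ₜ[K] w) - u ⊗ₜ[K] (w ⊗ₜ[K] v) - v ⊗ₜ[K] (u ⊗ₜ[K] w)
    + v ⊗ₜ[K] (w ⊗ₜ[K] u) + w ⊗ₜ[K] (u ⊗ₜ[K] v) - w ⊗ₜ[K] (v ⊗ₜ[K] u)


noncomputable def diag3L {K A : Type*} [Field K] [AddCommGroup A] [Module K A] :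
    (A →ₗ[K] A) →ₗ[K] ((A ⊗[K] (A ⊗[K] A)) →ₗ[K] (A ⊗[K] (A ⊗[K] A))) where
  toFun := diag3
  map_add' g h := by
    simp only [diag3, TensorProduct.map_add_left, TensorProduct.map_add_right]; abel
  map_smul' c g := by
    simp only [diag3, TensorProduct.map_smul_left, TensorProduct.map_smul_right,
      RingHom.id_apply, smul_add]

@[simp] lemma diag3L_apply {K A : Type*} [Field K] [AddCommGroup A] [Module K A]
    (g : A →ₗ[K] A) : diag3L g = diag3 g := rfl

section AuxAlt
variable {K A : Type*} [Field K] [AddCommGroup A] [Module K A]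

lemma diag3_altT (g : A →ₗ[K] A) (u v w : A) :
    diag3 g (altT u v w) = altT (g u) v w + altT u (g v) w + altT u v (g w) := by
  simp only [diag3, altT, LinearMap.add_apply, map_sub, map_add,
    TensorProduct.map_tmul, LinearMap.id_coe, id_eq]
  abel

lemma altT_same12 (u w : A) : altT (K := K) u u w = 0 := by simp only [altT]; abel
lemma altT_same13 (u v : A) : altT (K := K) u v u = 0 := by simp only [altT]; abel
lemma altT_same23 (u v : A) : altT (K := K) u v v = 0 := by simp only [altT]; abel
lemma altT_zero1 (v w : A) : altT (K := K) 0 v w = 0 := by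
  simp only [altT, TensorProduct.zero_tmul, TensorProduct.tmul_zero]; abel
lemma altT_zero2 (u w : A) : altT (K := K) u 0 w = 0 := by
  simp only [altT, TensorProduct.zero_tmul, TensorProduct.tmul_zero]; abel
lemma altT_zero3 (u v : A) : altT (K := K) u v 0 = 0 := by
  simp only [altT, TensorProduct.zero_tmul, TensorProduct.tmul_zero]; abel
lemma altT_neg1 (u v w : A) : altT (K := K) (-u) v w = -altT u v w := by
  simp only [altT, TensorProduct.neg_tmul, TensorProduct.tmul_neg]; abel
lemma altT_neg2 (u v w : A) : altT (K := K) u (-v) w = -altT u v w := by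
  simp only [altT, TensorProduct.neg_tmul, TensorProduct.tmul_neg]; abel
lemma altT_neg3 (u v w : A) : altT (K := K) u v (-w) = -altT u v w := by
  simp only [altT, TensorProduct.neg_tmul, TensorProduct.tmul_neg]; abel
end AuxAlt

set_option maxHeartbeats 1000000 in
set_option synthInstance.maxHeartbeats 400000 in
/-- For the 4-dimensional 3-Lie algebra with `[e2,e3,e4] = e1`,
`[e1,e3,e4] = e2` and the cocommutator `γ` determined by the alternating dual
structure constants of `[ẽ1,ẽ2,ẽ4]_* = b·ẽ1`, `[ẽ3,ẽ2,ẽ4]_* = b·ẽ3`, the map `γ`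
satisfies the 3-Lie bialgebra 1-cocycle condition. -/
theorem example_3Lie_bialgebra_cocycle
    (b : ℝ) (hb : b ≠ 0)
    (f : (Fin 4 → ℝ) →ₗ[ℝ] (Fin 4 → ℝ) →ₗ[ℝ] (Fin 4 → ℝ) →ₗ[ℝ] (Fin 4 → ℝ))
    (e : Fin 4 → (Fin 4 → ℝ)) (he : ∀ i : Fin 4, e i = Pi.single i 1)
    (halt1 : ∀ x y : Fin 4 → ℝ, f x x y = 0)
    (halt2 : ∀ x y : Fin 4 → ℝ, f x y y = 0)
    (hfil : ∀ x1 x2 y1 y2 y3 : Fin 4 → ℝ,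
      f x1 x2 (f y1 y2 y3) =
        f (f x1 x2 y1) y2 y3 + f y1 (f x1 x2 y2) y3 + f y1 y2 (f x1 x2 y3))
    (h123 : f (e 0) (e 1) (e 2) = 0)
    (h124 : f (e 0) (e 1) (e 3) = 0)
    (h234 : f (e 1) (e 2) (e 3) = e 0)
    (h134 : f (e 0) (e 2) (e 3) = e 1)
    (γ : (Fin 4 → ℝ) →ₗ[ℝ] (Fin 4 → ℝ) ⊗[ℝ] ((Fin 4 → ℝ) ⊗[ℝ] (Fin 4 → ℝ)))
    (hγ0 : γ (e 0) = b • altT (e 0) (e 1) (e 3))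
    (hγ1 : γ (e 1) = 0)
    (hγ2 : γ (e 2) = b • altT (e 2) (e 1) (e 3))
    (hγ3 : γ (e 3) = 0) :
    ∀ y1 y2 y3 : Fin 4 → ℝ,
      γ (f y1 y2 y3) =
        diag3 (f y2 y3) (γ y1) + diag3 (f y3 y1) (γ y2) + diag3 (f y1 y2) (γ y3) := by
  have hsw12 : ∀ x y z : Fin 4 → ℝ, f x y z = - f y x z := by
    intro x y z
    have h := halt1 (x + y) z
    simp only [map_add, LinearMap.add_apply, halt1, halt2, zero_add, add_zero] at h
    exact eq_neg_of_add_eq_zero_right h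
  have hsw23 : ∀ x y z : Fin 4 → ℝ, f x y z = - f x z y := by
    intro x y z
    have h := halt2 x (y + z)
    simp only [map_add, LinearMap.add_apply, halt1, halt2, zero_add, add_zero] at h
    exact eq_neg_of_add_eq_zero_right h
  have h13 : ∀ x y : Fin 4 → ℝ, f x y x = 0 := by
    intro x y; rw [hsw12, halt2, neg_zero]
  have hff : ∀ x : Fin 4 → ℝ, f x x = 0 := fun x => LinearMap.ext fun y => halt1 x y
  have hdg0 : diag3 (0 : (Fin 4 → ℝ) →ₗ[ℝ] (Fin 4 → ℝ)) = 0 := diag3L.map_zero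
  have hγz : γ (0 : Fin 4 → ℝ) = 0 := γ.map_zero
  have hdz : ∀ g : (Fin 4 → ℝ) →ₗ[ℝ] (Fin 4 → ℝ),
      diag3 g (0 : (Fin 4 → ℝ) ⊗[ℝ] ((Fin 4 → ℝ) ⊗[ℝ] (Fin 4 → ℝ))) = 0 :=
    fun g => (diag3 g).map_zero
  have ht012 : f (e 0) (e 1) (e 2) = (0 : Fin 4 → ℝ) := by simp [h123, h124, h234, h134]
  have ht013 : f (e 0) (e 1) (e 3) = (0 : Fin 4 → ℝ) := by simp [h123, h124, h234, h134]
  have ht021 : f (e 0) (e 2) (e 1) = (0 : Fin 4 → ℝ) := by rw [hsw23]; simp [h123, h124, h234, h134]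
  have ht023 : f (e 0) (e 2) (e 3) = e 1 := by simp [h123, h124, h234, h134]
  have ht031 : f (e 0) (e 3) (e 1) = (0 : Fin 4 → ℝ) := by rw [hsw23]; simp [h123, h124, h234, h134]
  have ht032 : f (e 0) (e 3) (e 2) = -e 1 := by rw [hsw23]; simp [h123, h124, h234, h134]
  have ht102 : f (e 1) (e 0) (e 2) = (0 : Fin 4 → ℝ) := by rw [hsw12]; simp [h123, h124, h234, h134]
  have ht103 : f (e 1) (e 0) (e 3) = (0 : Fin 4 → ℝ) := by rw [hsw12]; simp [h123, h124, h234, h134]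
  have ht120 : f (e 1) (e 2) (e 0) = (0 : Fin 4 → ℝ) := by rw [hsw23, hsw12]; simp [h123, h124, h234, h134]
  have ht123 : f (e 1) (e 2) (e 3) = e 0 := by simp [h123, h124, h234, h134]
  have ht130 : f (e 1) (e 3) (e 0) = (0 : Fin 4 → ℝ) := by rw [hsw23, hsw12]; simp [h123, h124, h234, h134]
  have ht132 : f (e 1) (e 3) (e 2) = -e 0 := by rw [hsw23]; simp [h123, h124, h234, h134]
  have ht201 : f (e 2) (e 0) (e 1) = (0 : Fin 4 → ℝ) := by rw [hsw12, hsw23]; simp [h123, h124, h234, h134]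
  have ht203 : f (e 2) (e 0) (e 3) = -e 1 := by rw [hsw12]; simp [h123, h124, h234, h134]
  have ht210 : f (e 2) (e 1) (e 0) = (0 : Fin 4 → ℝ) := by rw [hsw12, hsw23, hsw12]; simp [h123, h124, h234, h134]
  have ht213 : f (e 2) (e 1) (e 3) = -e 0 := by rw [hsw12]; simp [h123, h124, h234, h134]
  have ht230 : f (e 2) (e 3) (e 0) = e 1 := by rw [hsw23, hsw12]; simp [h123, h124, h234, h134]
  have ht231 : f (e 2) (e 3) (e 1) = e 0 := by rw [hsw23, hsw12]; simp [h123, h124, h234, h134]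
  have ht301 : f (e 3) (e 0) (e 1) = (0 : Fin 4 → ℝ) := by rw [hsw12, hsw23]; simp [h123, h124, h234, h134]
  have ht302 : f (e 3) (e 0) (e 2) = e 1 := by rw [hsw12, hsw23]; simp [h123, h124, h234, h134]
  have ht310 : f (e 3) (e 1) (e 0) = (0 : Fin 4 → ℝ) := by rw [hsw12, hsw23, hsw12]; simp [h123, h124, h234, h134]
  have ht312 : f (e 3) (e 1) (e 2) = e 0 := by rw [hsw12, hsw23]; simp [h123, h124, h234, h134]
  have ht320 : f (e 3) (e 2) (e 0) = -e 1 := by rw [hsw12, hsw23, hsw12]; simp [h123, h124, h234, h134]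
  have ht321 : f (e 3) (e 2) (e 1) = -e 0 := by rw [hsw12, hsw23, hsw12]; simp [h123, h124, h234, h134]

  have hf0 : (⟨0, by omega⟩ : Fin 4) = 0 := rfl
  have hf1 : (⟨1, by omega⟩ : Fin 4) = 1 := rfl
  have hf2 : (⟨2, by omega⟩ : Fin 4) = 2 := rfl
  have hf3 : (⟨3, by omega⟩ : Fin 4) = 3 := rfl
  have key : ∀ i j k : Fin 4, γ (f (e i) (e j) (e k)) =
      diag3 (f (e j) (e k)) (γ (e i)) + diag3 (f (e k) (e i)) (γ (e j))
        + diag3 (f (e i) (e j)) (γ (e k)) := by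
    intro i j k
    fin_cases i <;> fin_cases j <;> fin_cases k <;>
      simp only [hf0, hf1, hf2, hf3, ht012, ht013, ht021, ht023, ht031, ht032, ht102, ht103, ht120, ht123, ht130, ht132, ht201, ht203, ht210, ht213, ht230, ht231, ht301, ht302, ht310, ht312, ht320, ht321, halt1, halt2, h13, hff, hdg0, hγ0, hγ1, hγ2, hγ3, hγz, hdz, map_smul, map_neg, diag3_altT, altT_same12, altT_same13, altT_same23, altT_zero1, altT_zero2, altT_zero3, altT_neg1, altT_neg2, altT_neg3, LinearMap.zero_apply, smul_zero, smul_neg, neg_zero, neg_neg, add_zero, zero_add] <;> module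
  have hbe : ∀ i : Fin 4, (Pi.basisFun ℝ (Fin 4)) i = e i := by
    intro i; rw [Pi.basisFun_apply, he]
  intro y1 y2 y3
  set T3 := (Fin 4 → ℝ) ⊗[ℝ] ((Fin 4 → ℝ) ⊗[ℝ] (Fin 4 → ℝ)) with hT3
  set E : (Fin 4 → ℝ) →ₗ[ℝ] (Fin 4 → ℝ) →ₗ[ℝ] (Fin 4 → ℝ) →ₗ[ℝ] T3 :=
    (f.compr₂ diag3L).compr₂ (LinearMap.lcomp ℝ T3 γ) with hEdef
  have hmain : f.compr₂ (LinearMap.llcomp ℝ (Fin 4 → ℝ) (Fin 4 → ℝ) T3 γ) =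
      (LinearMap.lflip.toLinearMap ∘ₗ E).flip
        + (LinearMap.lflip.toLinearMap ∘ₗ ((LinearMap.lflip.toLinearMap ∘ₗ E).flip)).flip + E := by
    apply (Pi.basisFun ℝ (Fin 4)).ext; intro i
    apply (Pi.basisFun ℝ (Fin 4)).ext; intro j
    apply (Pi.basisFun ℝ (Fin 4)).ext; intro k
    simp only [hbe, hEdef, LinearMap.compr₂_apply, LinearMap.llcomp_apply,
      LinearMap.add_apply, LinearMap.flip_apply, LinearMap.coe_comp, Function.comp_apply,
      LinearMap.lflip_apply, LinearMap.lcomp_apply, diag3L_apply, LinearEquiv.coe_coe]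
    exact key i j k
  have h := DFunLike.congr_fun (DFunLike.congr_fun (DFunLike.congr_fun hmain y1) y2) y3
  simpa only [hEdef, LinearMap.compr₂_apply, LinearMap.llcomp_apply, LinearMap.add_apply,
    LinearMap.flip_apply, LinearMap.coe_comp, Function.comp_apply, LinearMap.lflip_apply,
    LinearMap.lcomp_apply, diag3L_apply, LinearEquiv.coe_coe] using h
end
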